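/- (Collaborating buyers: stability of the priced set.) Let f be the aggregated valuation of monotone nondecreasing submodular functions f₁,…,fₙ with f_i(∅)=0 and f_i({x})>0, let X ⊆ V, and define prices p(x) = min_i [(f_i(X) - f_i(X\{x}))/f_i({x})] · f({x}) for x ∈ X and p(y) = +∞ for y ∉ X. Then f(X) - p(X) ≥ f(Y) - p(Y) for all Y ⊆ X. -/

import Mathlib

/-- Collaborating buyers: stability of the priced set. With prices
p(x) = min_i [(f_i(X)-f_i(X\x))/f_i({x})]·f({x}), the set X maximizes
f(Y) - p(Y) over all Y ⊆ X. -/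
theorem stmt15 {V : Type*} [DecidableEq V] [Fintype V] (n : ℕ) [NeZero n]
    (fi : Fin n → Finset V → ℝ)
    (hmono : ∀ i, ∀ X Y : Finset V, X ⊆ Y → fi i X ≤ fi i Y)
    (hsub : ∀ i, ∀ X Y : Finset V, fi i X + fi i Y ≥ fi i (X ∩ Y) + fi i (X ∪ Y))
    (hempty : ∀ i, fi i ∅ = 0)
    (hpos : ∀ i (x : V), 0 < fi i {x})
    (f : Finset V → ℝ)
    (hf : ∀ X : Finset V,
      f X = (Finset.univ : Finset (V → Fin n)).sup' Finset.univ_nonempty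
        (fun a => ∑ i : Fin n, fi i (X.filter (fun x => a x = i))))
    (X : Finset V) (p : V → ℝ)
    (hp : ∀ x ∈ X, p x =
      ((Finset.univ : Finset (Fin n)).inf' Finset.univ_nonempty
        (fun i => (fi i X - fi i (X.erase x)) / fi i {x})) * f {x}) :
    ∀ Y : Finset V, Y ⊆ X →
      f X - ∑ x ∈ X, p x ≥ f Y - ∑ x ∈ Y, p x := by
  classical
  -- diminishing returns
  have hdim : ∀ i (S : Finset V) (x : V), x ∈ S → S ⊆ X →
      fi i X - fi i (X.erase x) ≤ fi i S - fi i (S.erase x) := by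
    intro i S x hxS hSX
    have h := hsub i S (X.erase x)
    have h1 : S ∩ (X.erase x) = S.erase x := by
      ext y
      simp only [Finset.mem_inter, Finset.mem_erase]
      constructor
      · rintro ⟨hyS, hyx, _⟩; exact ⟨hyx, hyS⟩
      · rintro ⟨hyx, hyS⟩; exact ⟨hyS, hyx, hSX hyS⟩
    have h2 : S ∪ (X.erase x) = X := by
      ext y
      simp only [Finset.mem_union, Finset.mem_erase]
      constructor
      · rintro (h' | h'); exacts [hSX h', h'.2]
      · intro hyX
        by_cases hyx : y = x
        · left; subst hyx; exact hxS
        · right; exact ⟨hyx, hyX⟩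
    rw [h1, h2] at h
    linarith
  -- value of singletons under any partition
  have hsing : ∀ (a : V → Fin n) (x : V),
      (∑ i : Fin n, fi i (({x} : Finset V).filter (fun y => a y = i))) = fi (a x) {x} := by
    intro a x
    rw [Finset.sum_eq_single (a x)]
    · congr 1
      ext y
      simp only [Finset.mem_filter, Finset.mem_singleton]
      constructor
      · rintro ⟨h', _⟩; exact h'
      · rintro rfl; exact ⟨rfl, rfl⟩
    · intro i _ hik
      have he : ({x} : Finset V).filter (fun y => a y = i) = ∅ := by
        ext y
        simp only [Finset.mem_filter, Finset.mem_singleton, Finset.notMem_empty, iff_false]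
        rintro ⟨rfl, h'⟩; exact hik h'.symm
      rw [he, hempty]
    · intro h'; exact absurd (Finset.mem_univ _) h'
  -- key: marginal value of x within any Z ⊆ X is at least p x
  have key : ∀ (Z : Finset V), Z ⊆ X → ∀ x ∈ Z, p x ≤ f Z - f (Z.erase x) := by
    intro Z hZX x hxZ
    have hxX : x ∈ X := hZX hxZ
    -- pick k attaining f {x}
    obtain ⟨a0, -, ha0⟩ := Finset.exists_mem_eq_sup' (Finset.univ_nonempty)
      (fun a : V → Fin n => ∑ i : Fin n, fi i (({x} : Finset V).filter (fun y => a y = i)))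
    set k := a0 x with hk
    have hfx : f {x} = fi k {x} := by
      rw [hf {x}, ha0, hsing]
    have hkpos : (0 : ℝ) < fi k {x} := hpos k x
    -- bound p x
    have hpx : p x ≤ fi k X - fi k (X.erase x) := by
      rw [hp x hxX, hfx]
      have hinf : (Finset.univ : Finset (Fin n)).inf' Finset.univ_nonempty
          (fun i => (fi i X - fi i (X.erase x)) / fi i {x})
          ≤ (fi k X - fi k (X.erase x)) / fi k {x} :=
        Finset.inf'_le _ (Finset.mem_univ k)
      calc _ ≤ ((fi k X - fi k (X.erase x)) / fi k {x}) * fi k {x} :=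
            mul_le_mul_of_nonneg_right hinf hkpos.le
        _ = fi k X - fi k (X.erase x) := div_mul_cancel₀ _ hkpos.ne'
    -- pick partition attaining f (Z.erase x)
    obtain ⟨a, -, ha⟩ := Finset.exists_mem_eq_sup' (Finset.univ_nonempty)
      (fun b : V → Fin n => ∑ i : Fin n, fi i ((Z.erase x).filter (fun y => b y = i)))
    set a' := Function.update a x k with ha'
    set T := (Z.erase x).filter (fun y => a y = k) with hT
    have hxT : x ∉ T := fun h => (Finset.mem_erase.mp (Finset.mem_filter.mp h).1).1 rfl
    have hA : ∀ i : Fin n, Z.filter (fun y => a' y = i) =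
        if i = k then insert x ((Z.erase x).filter (fun y => a y = i))
        else (Z.erase x).filter (fun y => a y = i) := by
      intro i
      ext y
      by_cases hyx : y = x
      · subst hyx
        by_cases hik : i = k
        · simp [ha', hik, hxZ, Function.update_self]
        · simp only [Finset.mem_filter, ha', Function.update_self, if_neg hik,
            Finset.mem_erase]
          constructor
          · rintro ⟨_, h'⟩; exact absurd h'.symm hik
          · rintro ⟨⟨h', _⟩, _⟩; exact absurd rfl h'
      · have hupd : a' y = a y := Function.update_of_ne hyx _ _
        by_cases hik : i = k
        · simp only [Finset.mem_filter, hupd, if_pos hik, Finset.mem_insert, hyx,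
            false_or, Finset.mem_erase]
          constructor
          · rintro ⟨h1, h2⟩; exact ⟨⟨hyx, h1⟩, h2⟩
          · rintro ⟨⟨_, h1⟩, h2⟩; exact ⟨h1, h2⟩
        · simp only [Finset.mem_filter, hupd, if_neg hik, Finset.mem_erase]
          constructor
          · rintro ⟨h1, h2⟩; exact ⟨⟨hyx, h1⟩, h2⟩
          · rintro ⟨⟨_, h1⟩, h2⟩; exact ⟨h1, h2⟩
    have hsum : (∑ i : Fin n, fi i (Z.filter (fun y => a' y = i)))
        - (∑ i : Fin n, fi i ((Z.erase x).filter (fun y => a y = i)))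
        = fi k (insert x T) - fi k T := by
      rw [← Finset.sum_sub_distrib]
      rw [Finset.sum_eq_single k]
      · rw [hA k, if_pos rfl]
      · intro i _ hik
        rw [hA i, if_neg hik]
        ring
      · intro h'; exact absurd (Finset.mem_univ _) h'
    have hle : f (Z.erase x) + (fi k (insert x T) - fi k T) ≤ f Z := by
      have h1 : (∑ i : Fin n, fi i (Z.filter (fun y => a' y = i))) ≤ f Z := by
        rw [hf Z]
        exact Finset.le_sup' (fun b : V → Fin n => ∑ i : Fin n,
          fi i (Z.filter (fun y => b y = i))) (Finset.mem_univ a')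
      rw [hf (Z.erase x), ha]
      linarith [hsum]
    -- diminishing returns applied to insert x T
    have hsub' : insert x T ⊆ X := by
      intro y hy
      rcases Finset.mem_insert.mp hy with rfl | hy
      · exact hxX
      · exact hZX (Finset.erase_subset _ _ (Finset.mem_filter.mp hy).1)
    have herase : (insert x T).erase x = T := Finset.erase_insert hxT
    have hd := hdim k (insert x T) x (Finset.mem_insert_self x T) hsub'
    rw [herase] at hd
    linarith
  -- main induction: removing a subset W of X costs at least its price
  have main : ∀ (W : Finset V), W ⊆ X → f (X \ W) + ∑ x ∈ W, p x ≤ f X := by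
    intro W
    induction W using Finset.induction_on with
    | empty => intro _; simp
    | insert _ _ hxW =>
      rename_i x W ih
      intro hW
      have hWX : W ⊆ X := (Finset.subset_insert x W).trans hW
      have hxX : x ∈ X := hW (Finset.mem_insert_self x W)
      have hxZ : x ∈ X \ W := Finset.mem_sdiff.mpr ⟨hxX, hxW⟩
      have hZ : X \ W ⊆ X := Finset.sdiff_subset
      have hk := key (X \ W) hZ x hxZ
      have hset : X \ insert x W = (X \ W).erase x := by
        ext y
        simp only [Finset.mem_sdiff, Finset.mem_insert, Finset.mem_erase]
        tauto
      rw [hset, Finset.sum_insert hxW]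
      have := ih hWX
      linarith
  intro Y hYX
  have h1 := main (X \ Y) Finset.sdiff_subset
  have h2 : X \ (X \ Y) = Y := by
    rw [Finset.sdiff_sdiff_self_left, Finset.inter_eq_right.mpr hYX]
  rw [h2] at h1
  have h3 : (∑ x ∈ X \ Y, p x) + ∑ x ∈ Y, p x = ∑ x ∈ X, p x :=
    Finset.sum_sdiff hYX
  linarith
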